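/- arXiv:math/0401150 — 5 statements merged into one kernel-verified Lean document; each statement's English description precedes it below -/
import Mathlib

section
/- Let H be a closed additive subgroup of ℝ^r. Then either H = ℝ^r, or there exists a nonzero ℝ-linear form ψ on ℝ^r such that ψ(H) ⊆ ℤ. -/
open Submodule Filter Topology Module

/-- Discreteness of `H ∩ W` where `W` is a complement of the maximal subspace inside a
closed subgroup `H`. -/
lemma aux_discrete {E : Type*} [NormedAddCommGroup E] [NormedSpace ℝ E] [FiniteDimensional ℝ E]
    (H : AddSubgroup E) (hH : IsClosed (H : Set E)) (V W : Submodule ℝ E)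
    (hV : ∀ x : E, (∀ t : ℝ, t • x ∈ H) → x ∈ V) (hW : IsCompl V W) :
    ∃ ε > 0, ∀ x : E, x ∈ H → x ∈ W → ‖x‖ < ε → x = 0 := by
  by_contra hcon
  push_neg at hcon
  have hsel : ∀ n : ℕ, ∃ x : E, x ∈ H ∧ x ∈ W ∧ ‖x‖ < 1/(n+1) ∧ x ≠ 0 := by
    intro n
    exact hcon (1/(n+1)) (by positivity)
  choose x hxH hxW hxn hx0 using hsel
  have hxn0 : ∀ n, ‖x n‖ ≠ 0 := fun n => norm_ne_zero_iff.mpr (hx0 n)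
  set u : ℕ → E := fun n => ‖x n‖⁻¹ • x n with hu
  have husph : ∀ n, u n ∈ Metric.sphere (0:E) 1 := by
    intro n
    rw [mem_sphere_zero_iff_norm, hu]
    simp only [norm_smul, norm_inv, norm_norm]
    exact inv_mul_cancel₀ (hxn0 n)
  obtain ⟨a, ha, φ, hφ, htend⟩ := (isCompact_sphere (0:E) 1).tendsto_subseq husph
  have hxlim : Tendsto (fun n => ‖x (φ n)‖) atTop (𝓝 0) := by
    refine squeeze_zero (fun n => norm_nonneg _) (fun n => (hxn (φ n)).le.trans ?_)
      tendsto_one_div_add_atTop_nhds_zero_nat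
    refine one_div_le_one_div_of_le (by positivity) ?_
    have : (n:ℝ) ≤ (φ n : ℝ) := by exact_mod_cast hφ.le_apply
    linarith
  have haW : a ∈ W := by
    have hWc : IsClosed (W : Set E) := W.closed_of_finiteDimensional
    exact hWc.mem_of_tendsto htend
      (Filter.Eventually.of_forall fun n => W.smul_mem _ (hxW (φ n)))
  have haV : a ∈ V := by
    refine hV a (fun t => ?_)
    have heq : ∀ n, (⌊t / ‖x (φ n)‖⌋ : ℤ) • x (φ n)
        = ((⌊t / ‖x (φ n)‖⌋ : ℝ) * ‖x (φ n)‖) • u (φ n) := by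
      intro n
      have h1 : ((⌊t / ‖x (φ n)‖⌋ : ℝ) * ‖x (φ n)‖) • u (φ n)
          = (⌊t / ‖x (φ n)‖⌋ : ℝ) • x (φ n) := by
        rw [hu]
        rw [smul_smul, mul_assoc, mul_inv_cancel₀ (hxn0 _), mul_one]
      rw [h1, Int.cast_smul_eq_zsmul]
    have hcoef : Tendsto (fun n => (⌊t / ‖x (φ n)‖⌋ : ℝ) * ‖x (φ n)‖) atTop (𝓝 t) := by
      have hb : ∀ n, ‖(⌊t / ‖x (φ n)‖⌋ : ℝ) * ‖x (φ n)‖ - t‖ ≤ ‖x (φ n)‖ := by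
        intro n
        have hpos : (0:ℝ) < ‖x (φ n)‖ := lt_of_le_of_ne (norm_nonneg _) (Ne.symm (hxn0 _))
        have h1 : (⌊t / ‖x (φ n)‖⌋ : ℝ) * ‖x (φ n)‖ - t
            = ((⌊t / ‖x (φ n)‖⌋ : ℝ) - t / ‖x (φ n)‖) * ‖x (φ n)‖ := by
          field_simp
        rw [Real.norm_eq_abs, h1, abs_mul, abs_of_pos hpos]
        have h2 : |(⌊t / ‖x (φ n)‖⌋ : ℝ) - t / ‖x (φ n)‖| ≤ 1 := by
          rw [abs_sub_comm, Int.self_sub_floor, abs_of_nonneg (Int.fract_nonneg _)]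
          exact (Int.fract_lt_one _).le
        calc |(⌊t / ‖x (φ n)‖⌋ : ℝ) - t / ‖x (φ n)‖| * ‖x (φ n)‖
            ≤ 1 * ‖x (φ n)‖ := by gcongr
          _ = ‖x (φ n)‖ := one_mul _
      have h0 := squeeze_zero_norm hb hxlim
      have h3 := h0.add_const t
      simpa using h3
    have key := hcoef.smul htend
    have key' : Tendsto (fun n => (⌊t / ‖x (φ n)‖⌋ : ℤ) • x (φ n)) atTop (𝓝 (t • a)) := by
      simpa only [heq, Function.comp_apply] using key
    exact hH.mem_of_tendsto key'
      (Filter.Eventually.of_forall fun n => AddSubgroup.zsmul_mem H (hxH (φ n)) _)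
  have ha0 : a = 0 := Submodule.disjoint_def.mp hW.disjoint a haV haW
  rw [mem_sphere_zero_iff_norm, ha0] at ha
  simp at ha

/-- If `H` is a closed additive subgroup of `ℝ^r`, then either `H = ℝ^r` or there exists a
nonzero `ℝ`-linear form `ψ` on `ℝ^r` with `ψ(H) ⊆ ℤ`. -/
theorem closed_subgroup_top_or_integer_form (r : ℕ) (H : AddSubgroup (Fin r → ℝ))
    (hH : IsClosed (H : Set (Fin r → ℝ))) :
    H = ⊤ ∨ ∃ ψ : (Fin r → ℝ) →ₗ[ℝ] ℝ, ψ ≠ 0 ∧ ∀ x ∈ H, ∃ m : ℤ, ψ x = m := by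
  by_cases hHtop : H = ⊤
  · exact Or.inl hHtop
  right
  set E := (Fin r → ℝ) with hE
  -- the maximal subspace contained in `H`
  set V : Submodule ℝ E :=
    { carrier := {x : E | ∀ t : ℝ, t • x ∈ H}
      add_mem' := fun {a b} hx hy t => by
        rw [smul_add]; exact H.add_mem (hx t) (hy t)
      zero_mem' := fun t => by rw [smul_zero]; exact H.zero_mem
      smul_mem' := fun c x hx t => by rw [smul_smul]; exact hx (t * c) } with hVdef
  have hVmem : ∀ x : E, x ∈ V ↔ ∀ t : ℝ, t • x ∈ H := fun x => Iff.rfl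
  have hVH : ∀ x ∈ V, x ∈ H := fun x hx => by simpa using (hVmem x).mp hx 1
  obtain ⟨W, hW⟩ := Submodule.exists_isCompl V
  obtain ⟨ε, hε, hball⟩ := aux_discrete H hH V W (fun x hx => (hVmem x).mpr hx) hW
  -- the discrete part
  set L : Submodule ℤ E := AddSubgroup.toIntSubmodule (H ⊓ W.toAddSubgroup) with hLdef
  have hLmem : ∀ x : E, x ∈ L ↔ x ∈ H ∧ x ∈ W := fun x => Iff.rfl
  have hLdisc : DiscreteTopology L := by
    refine discreteTopology_iff_isOpen_singleton_zero.mpr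
      ⟨Metric.ball 0 ε, Metric.isOpen_ball, ?_⟩
    ext y
    simp only [Set.mem_preimage, mem_ball_zero_iff, Set.mem_singleton_iff]
    constructor
    · intro hy
      exact Subtype.ext (hball y ((hLmem y).mp y.2).1 ((hLmem y).mp y.2).2 hy)
    · rintro rfl
      simpa using hε
  -- decomposition of elements of `H`
  have hdecomp : ∀ h ∈ H, ∃ v ∈ V, ∃ w ∈ L, h = v + w := by
    intro h hh
    refine ⟨V.linearProjOfIsCompl W hW h, (V.linearProjOfIsCompl W hW h).2,
      W.linearProjOfIsCompl V hW.symm h, ?_, ?_⟩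
    · refine (hLmem _).mpr ⟨?_, (W.linearProjOfIsCompl V hW.symm h).2⟩
      have hsum := Submodule.projection_add_projection_eq_self hW h
      have hv : ((V.linearProjOfIsCompl W hW h : E)) ∈ H :=
        hVH _ (V.linearProjOfIsCompl W hW h).2
      have heq : (W.linearProjOfIsCompl V hW.symm h : E)
          = h - (V.linearProjOfIsCompl W hW h : E) := eq_sub_of_add_eq' hsum
      rw [heq]
      exact H.sub_mem hh hv
    · exact (Submodule.projection_add_projection_eq_self hW h).symm
  -- span of the discrete part
  set W' : Submodule ℝ E := Submodule.span ℝ (L : Set E) with hW'def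
  have hW'leW : W' ≤ W := Submodule.span_le.mpr (fun y hy => ((hLmem y).mp hy).2)
  by_cases hcase : V ⊔ W' = ⊤
  · -- the lattice case
    have hC : IsCompl V W' :=
      ⟨hW.disjoint.mono_right hW'leW, codisjoint_iff.mpr hcase⟩
    -- `L` is not trivial
    have hLne : L ≠ ⊥ := by
      intro hLbot
      apply hHtop
      have hWbot : W' = ⊥ := by rw [hW'def, hLbot]; simp
      have hVtop : V = ⊤ := by
        rw [hWbot, sup_bot_eq] at hcase; exact hcase
      refine top_unique (fun y _ => ?_)
      exact hVH y (hVtop ▸ Submodule.mem_top)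
    -- `L` as a lattice in `W'`
    set L₀ : Submodule ℤ W' := L.comap (W'.subtype.restrictScalars ℤ) with hL₀def
    have h_img : (W'.subtype.restrictScalars ℤ) '' L₀ = (L : Set E) := by
      rw [← Submodule.map_coe (W'.subtype.restrictScalars ℤ),
        Submodule.map_comap_eq_self]
      intro y hy
      exact LinearMap.mem_range.mpr ⟨⟨y, Submodule.subset_span hy⟩, rfl⟩
    have hL₀disc : DiscreteTopology L₀ := by
      refine DiscreteTopology.preimage_of_continuous_injective (L : Set E) ?_
        (Submodule.injective_subtype _)
      exact LinearMap.continuous_of_finiteDimensional W'.subtype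
    have hL₀Z : IsZLattice ℝ L₀ := ⟨by
      rw [← (Submodule.map_injective_of_injective
        (Submodule.injective_subtype W')).eq_iff, Submodule.map_span, Submodule.map_top,
        Submodule.range_subtype]
      change Submodule.span ℝ ((W'.subtype.restrictScalars ℤ) '' L₀) = W'
      rw [h_img]⟩
    have : Module.Finite ℤ L₀ := ZLattice.module_finite ℝ L₀
    have : Module.Free ℤ L₀ := ZLattice.module_free ℝ L₀
    set b₀ := Module.Free.chooseBasis ℤ L₀ with hb₀
    set bR := b₀.ofZLatticeBasis ℝ L₀ with hbR
    -- pick a coordinate where some lattice point has nonzero coordinate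
    obtain ⟨z, hzL, hz0⟩ := Submodule.exists_mem_ne_zero_of_ne_bot hLne
    set z₀ : L₀ := ⟨⟨z, Submodule.subset_span hzL⟩, by
      simpa [hL₀def] using hzL⟩ with hz₀
    have hz₀0 : z₀ ≠ 0 := by
      intro hzz
      apply hz0
      have := congrArg (fun w : L₀ => ((w : W') : E)) hzz
      simpa [hz₀] using this
    have hrep : b₀.repr z₀ ≠ 0 := by
      intro hr
      apply hz₀0
      exact b₀.repr.map_eq_zero_iff.mp hr
    obtain ⟨i₀, hi₀⟩ := Finsupp.ne_iff.mp hrep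
    simp only [Finsupp.coe_zero, Pi.zero_apply] at hi₀
    -- the linear form
    set π : E →ₗ[ℝ] W' := W'.linearProjOfIsCompl V hC.symm with hπ
    set ψ : E →ₗ[ℝ] ℝ := (bR.coord i₀).comp π with hψ
    have hψmem : ∀ w : E, (hw : w ∈ L) → ψ w = (b₀.repr ⟨⟨w, Submodule.subset_span hw⟩,
        by simpa [hL₀def] using hw⟩ i₀ : ℤ) := by
      intro w hw
      have hwW' : w ∈ W' := Submodule.subset_span hw
      have hproj : π w = ⟨w, hwW'⟩ :=
        Submodule.linearProjOfIsCompl_apply_left hC.symm ⟨w, hwW'⟩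
      rw [hψ]
      simp only [LinearMap.coe_comp, Function.comp_apply, hproj, Basis.coord_apply]
      rw [hbR]
      exact b₀.ofZLatticeBasis_repr_apply ℝ L₀
        ⟨⟨w, hwW'⟩, by simpa [hL₀def] using hw⟩ i₀
    refine ⟨ψ, ?_, ?_⟩
    · intro hψ0
      apply hi₀
      have := congrArg (fun f : E →ₗ[ℝ] ℝ => f z) hψ0
      simp only [LinearMap.zero_apply] at this
      rw [hψmem z hzL] at this
      exact_mod_cast this
    · intro y hy
      obtain ⟨v, hvV, w, hwL, rfl⟩ := hdecomp y hy
      refine ⟨b₀.repr ⟨⟨w, Submodule.subset_span hwL⟩, by simpa [hL₀def] using hwL⟩ i₀, ?_⟩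
      have hv0 : ψ v = 0 := by
        rw [hψ]
        simp only [LinearMap.coe_comp, Function.comp_apply, hπ]
        erw [Submodule.projectionOnto_apply_of_mem_right hC.symm hvV]
        simp
      rw [map_add, hv0, zero_add, hψmem w hwL]
  · -- the degenerate case: everything is killed by a nonzero form
    obtain ⟨ψ, hψ0, hψker⟩ := Submodule.exists_dual_map_eq_bot_of_lt_top
      (lt_top_iff_ne_top.mpr hcase) inferInstance
    refine ⟨ψ, hψ0, fun y hy => ⟨0, ?_⟩⟩
    obtain ⟨v, hvV, w, hwL, rfl⟩ := hdecomp y hy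
    have hmem : v + w ∈ V ⊔ W' :=
      Submodule.add_mem_sup hvV (Submodule.subset_span hwL)
    have : ψ (v + w) ∈ Submodule.map ψ (V ⊔ W') := Submodule.mem_map_of_mem hmem
    rw [hψker] at this
    simpa using this
end

section
/- Let ω₁, …, ω_r ∈ ℝ^n be vectors that are linearly independent over ℤ (i.e., the only integer relation q₁ω₁ + ⋯ + q_rω_r = 0 with q_j ∈ ℤ is the trivial one). Then the additive subgroup G := { x ∈ ℝ^r : x_j = ⟨t, ω_j⟩ + p_j for some t ∈ ℝ^n and p_j ∈ ℤ, j = 1,…,r } is dense in ℝ^r. -/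
open Module Submodule

lemma line_lemma (E : Type) [NormedAddCommGroup E] [NormedSpace ℝ E] [FiniteDimensional ℝ E]
    (H : AddSubgroup E) (hc : IsClosed (H : Set E))
    (hnd : ∀ ε > (0:ℝ), ∃ h ∈ H, h ≠ 0 ∧ ‖h‖ < ε) :
    ∃ u : E, ‖u‖ = 1 ∧ ∀ c : ℝ, c • u ∈ H := by
  have : ProperSpace E := FiniteDimensional.proper ℝ E
  -- pick a sequence of small nonzero elements
  have hex : ∀ k : ℕ, ∃ h : E, h ∈ H ∧ h ≠ 0 ∧ ‖h‖ < 1/(k+1) := by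
    intro k
    obtain ⟨h, h1, h2, h3⟩ := hnd (1/(k+1)) (by positivity)
    exact ⟨h, h1, h2, h3⟩
  choose h hH hne hsmall using hex
  set v : ℕ → E := fun k => ‖h k‖⁻¹ • h k with hv
  have hnorm : ∀ k, ‖h k‖ > 0 := fun k => norm_pos_iff.mpr (hne k)
  have hvs : ∀ k, v k ∈ Metric.sphere (0:E) 1 := by
    intro k
    simp [hv, norm_smul, abs_of_pos (inv_pos.mpr (hnorm k)),
      inv_mul_cancel₀ (ne_of_gt (hnorm k))]
  obtain ⟨u, hu, φ, hφ, hconv⟩ :=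
    (isCompact_sphere (0:E) 1).tendsto_subseq hvs
  have hu1 : ‖u‖ = 1 := by simpa using hu
  refine ⟨u, hu1, fun c => ?_⟩
  suffices hcl : c • u ∈ closure (H : Set E) by
    rwa [hc.closure_eq] at hcl
  rw [Metric.mem_closure_iff]
  intro ε hε
  -- choose k with small norm and good approximation
  have h1 : Filter.Tendsto (fun k => ‖h (φ k)‖) Filter.atTop (nhds 0) := by
    apply squeeze_zero (fun k => (hnorm _).le) (fun k => (hsmall (φ k)).le)
    apply Filter.Tendsto.comp tendsto_one_div_add_atTop_nhds_zero_nat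
      (StrictMono.tendsto_atTop hφ)
  have h2 : Filter.Tendsto (fun k => ‖v (φ k) - u‖) Filter.atTop (nhds 0) :=
    tendsto_iff_norm_sub_tendsto_zero.mp hconv
  have hev : ∀ᶠ k in Filter.atTop, ‖h (φ k)‖ < ε/2 ∧ ‖v (φ k) - u‖ < ε/(2*(|c|+1)) := by
    filter_upwards [h1.eventually (gt_mem_nhds (by positivity : (0:ℝ) < ε/2)),
      h2.eventually (gt_mem_nhds (by positivity : (0:ℝ) < ε/(2*(|c|+1))))] with k hk1 hk2
    exact ⟨hk1, hk2⟩
  obtain ⟨k, hk1, hk2⟩ := hev.exists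
  set a := ‖h (φ k)‖ with ha
  set m : ℤ := ⌊c / a⌋ with hm
  refine ⟨m • h (φ k), AddSubgroup.zsmul_mem H (hH _) m, ?_⟩
  have hpos : (0:ℝ) < a := hnorm (φ k)
  have key : m • h (φ k) = ((m : ℝ) * a) • v (φ k) := by
    calc m • h (φ k) = ((m:ℝ)) • h (φ k) := (Int.cast_smul_eq_zsmul ℝ m _).symm
      _ = ((m:ℝ) * a) • v (φ k) := by
          rw [hv, smul_smul]
          congr 1
          rw [ha, mul_assoc, mul_inv_cancel₀ (hnorm _).ne', mul_one]
  rw [dist_eq_norm, key]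
  have hdec : c • u - ((m:ℝ) * a) • v (φ k)
      = c • (u - v (φ k)) + (c - (m:ℝ)*a) • v (φ k) := by
    simp [smul_sub, sub_smul]
  have hva : ‖v (φ k)‖ = 1 := by simpa using hvs (φ k)
  have hbound1 : ‖c • (u - v (φ k))‖ ≤ |c| * (ε/(2*(|c|+1))) := by
    rw [norm_smul, Real.norm_eq_abs]
    apply mul_le_mul_of_nonneg_left _ (abs_nonneg c)
    rw [← norm_neg]; simpa using hk2.le
  have hfloor : |c - (m:ℝ)*a| ≤ a := by
    have h0 : (m:ℝ) ≤ c / a := Int.floor_le _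
    have h1' : c / a - 1 < (m:ℝ) := Int.sub_one_lt_floor _
    have hma : (m:ℝ) * a ≤ c := by
      have := mul_le_mul_of_nonneg_right h0 hpos.le
      rwa [div_mul_cancel₀ _ hpos.ne'] at this
    have hma2 : c - a < (m:ℝ) * a := by
      have := mul_lt_mul_of_pos_right h1' hpos
      rwa [sub_mul, one_mul, div_mul_cancel₀ _ hpos.ne'] at this
    rw [abs_le]
    constructor <;> linarith
  have hbound2 : ‖(c - (m:ℝ)*a) • v (φ k)‖ ≤ a := by
    rw [norm_smul, hva, mul_one, Real.norm_eq_abs]; exact hfloor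
  calc ‖c • u - ((m:ℝ) * a) • v (φ k)‖
      ≤ ‖c • (u - v (φ k))‖ + ‖(c - (m:ℝ)*a) • v (φ k)‖ := by
        rw [hdec]; exact norm_add_le _ _
    _ ≤ |c| * (ε/(2*(|c|+1))) + a := add_le_add hbound1 hbound2
    _ < ε := by
        have e1 : |c| * (ε / (2 * (|c| + 1))) ≤ ε / 2 := by
          rw [mul_comm, div_mul_eq_mul_div, div_le_div_iff₀ (by positivity) (by positivity)]
          nlinarith [abs_nonneg c, hε.le]
        linarith

lemma key_lemma : ∀ (d : ℕ) (E : Type) [NormedAddCommGroup E] [NormedSpace ℝ E]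
    [FiniteDimensional ℝ E], finrank ℝ E = d →
    ∀ (H : AddSubgroup E), IsClosed (H : Set E) → (H : Set E) ≠ Set.univ →
    ∃ f : E →ₗ[ℝ] ℝ, f ≠ 0 ∧ ∀ h ∈ H, ∃ z : ℤ, f h = z := by
  intro d
  induction d using Nat.strong_induction_on with
  | _ d ih =>
    intro E _ _ _ hd H hc hne
    by_cases hnd : ∀ ε > (0:ℝ), ∃ h ∈ H, h ≠ 0 ∧ ‖h‖ < ε
    · -- non-discrete case: H contains a line
      obtain ⟨u, hu1, hline⟩ := line_lemma E H hc hnd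
      have hu0 : u ≠ 0 := by intro h; rw [h] at hu1; simp at hu1
      set U : Submodule ℝ E := span ℝ {u} with hU
      obtain ⟨W, hW⟩ := Submodule.exists_isCompl U
      have hdim : finrank ℝ U + finrank ℝ W = d := by
        rw [← hd]; exact Submodule.finrank_add_eq_of_isCompl hW
      have hdimU : finrank ℝ U = 1 := finrank_span_singleton hu0
      have hdimW : finrank ℝ W < d := by omega
      -- the projection onto W along U
      set π : E →ₗ[ℝ] W := W.projectionOnto U hW.symm with hπ
      have hUH : ∀ x ∈ U, x ∈ H := by
        intro x hx
        rw [hU, mem_span_singleton] at hx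
        obtain ⟨c, rfl⟩ := hx
        exact hline c
      set H' : AddSubgroup W := H.comap W.subtype.toAddMonoidHom with hH'
      have hc' : IsClosed (H' : Set W) := by
        have : (H' : Set W) = (Subtype.val) ⁻¹' (H : Set E) := rfl
        rw [this]
        exact hc.preimage continuous_subtype_val
      have hid : ∀ x : E, x = (↑(U.projectionOnto W hW x) : E) + ↑(π x) := by
        intro x
        rw [hπ]
        exact (Submodule.projection_add_projection_eq_self hW x).symm
      have hne' : (H' : Set W) ≠ Set.univ := by
        intro habs
        apply hne
        rw [Set.eq_univ_iff_forall]
        intro x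
        have h1 : (↑(U.projectionOnto W hW x) : E) ∈ H :=
          hUH _ (U.projectionOnto W hW x).2
        have h2 : (↑(π x) : E) ∈ H := by
          have : π x ∈ H' := by rw [Set.eq_univ_iff_forall] at habs; exact habs _
          exact this
        have := H.add_mem h1 h2
        rwa [← hid x] at this
      obtain ⟨f', hf'0, hf'⟩ := ih (finrank ℝ W) hdimW W rfl H' hc' hne'
      refine ⟨f'.comp π, ?_, ?_⟩
      · intro habs
        apply hf'0
        ext w
        have : (f'.comp π) w = 0 := by rw [habs]; rfl
        rwa [LinearMap.comp_apply, hπ, Submodule.projectionOnto_apply_left] at this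
      · intro h hh
        have hπh : π h ∈ H' := by
          show (↑(π h) : E) ∈ H
          have h1 : (↑(U.projectionOnto W hW h) : E) ∈ H :=
            hUH _ (U.projectionOnto W hW h).2
          have := H.sub_mem hh h1
          have heq : (↑(π h) : E) = h - ↑(U.projectionOnto W hW h) := by
            rw [eq_sub_iff_add_eq, add_comm]
            exact (hid h).symm
          rwa [← heq] at this
        obtain ⟨z, hz⟩ := hf' (π h) hπh
        exact ⟨z, by rw [LinearMap.comp_apply, hz]⟩
    · -- discrete case
      push_neg at hnd
      obtain ⟨ε, hε, hiso⟩ := hnd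
      set L : Submodule ℤ E := AddSubgroup.toIntSubmodule H with hL
      have hLset : (L : Set E) = (H : Set E) := rfl
      have hdisc : DiscreteTopology L := by
        rw [discreteTopology_iff_isOpen_singleton_zero]
        have : ({0} : Set L) = (Subtype.val) ⁻¹' (Metric.ball (0:E) ε) := by
          ext x
          simp only [Set.mem_singleton_iff, Set.mem_preimage, Metric.mem_ball,
            dist_zero_right]
          constructor
          · rintro rfl; simpa using hε
          · intro hx
            have := hiso x.1 x.2
            by_contra hx0
            have hx1 : (x:E) ≠ 0 := fun h => hx0 (Subtype.ext h)
            exact absurd (this hx1) (not_le.mpr hx)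
        rw [this]
        exact isOpen_induced Metric.isOpen_ball
      by_cases hspan : span ℝ (H : Set E) = ⊤
      · -- H is a full lattice
        have hZL : IsZLattice ℝ L := ⟨by rw [hLset]; exact hspan⟩
        have hfin : Module.Finite ℤ L := ZLattice.module_finite ℝ L
        have hfree : Module.Free ℤ L := ZLattice.module_free ℝ L
        set b := Module.Free.chooseBasis ℤ L with hb
        have hrank : finrank ℤ L = finrank ℝ E := ZLattice.rank ℝ L
        have hne0 : Nonempty (Module.Free.ChooseBasisIndex ℤ L) := by
          by_contra hemp
          rw [not_nonempty_iff] at hemp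
          have h0 : finrank ℤ L = 0 := by
            rw [finrank_eq_card_chooseBasisIndex]
            simp
          rw [h0] at hrank
          have : Subsingleton E := finrank_zero_iff.mp hrank.symm
          apply hne
          rw [Set.eq_univ_iff_forall]
          intro x
          have : x = 0 := Subsingleton.elim x 0
          rw [this]; exact H.zero_mem
        obtain ⟨i₀⟩ := hne0
        set B := b.ofZLatticeBasis ℝ L with hB
        refine ⟨B.coord i₀, ?_, ?_⟩
        · intro habs
          have : B.coord i₀ (B i₀) = 0 := by rw [habs]; rfl
          rw [Basis.coord_apply, Basis.repr_self] at this
          simp at this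
        · intro h hh
          have hhL : h ∈ L := hh
          refine ⟨b.repr ⟨h, hhL⟩ i₀, ?_⟩
          rw [Basis.coord_apply]
          have := b.ofZLatticeBasis_repr_apply ℝ L ⟨h, hhL⟩ i₀
          rw [← hB] at this
          exact this
      · -- H spans a proper subspace
        obtain ⟨f, hf0, hf⟩ := Submodule.exists_dual_map_eq_bot_of_lt_top
          (lt_top_iff_ne_top.mpr hspan) inferInstance
        refine ⟨f, hf0, fun h hh => ⟨0, ?_⟩⟩
        have : f h ∈ (span ℝ (H : Set E)).map f :=
          Submodule.mem_map_of_mem (subset_span hh)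
        rw [hf] at this
        simpa using this

/-- Multidimensional Kronecker approximation: if `ω₁, …, ω_r ∈ ℝ^n` are linearly independent
over `ℤ`, then the subgroup `G = {x : x_j = ⟨t, ω_j⟩ + p_j, t ∈ ℝ^n, p ∈ ℤ^r}` is dense
in `ℝ^r`. -/
theorem kronecker_approximation (n r : ℕ) (ω : Fin r → (Fin n → ℝ))
    (hω : ∀ q : Fin r → ℤ, (∑ j, (q j : ℝ) • ω j) = 0 → ∀ j, q j = 0) :
    Dense {x : Fin r → ℝ |
      ∃ (t : Fin n → ℝ) (p : Fin r → ℤ), ∀ j, x j = (∑ i, t i * ω j i) + p j} := by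
  set S : Set (Fin r → ℝ) := {x : Fin r → ℝ |
      ∃ (t : Fin n → ℝ) (p : Fin r → ℤ), ∀ j, x j = (∑ i, t i * ω j i) + p j} with hS
  by_contra hnd
  -- S is a subgroup
  set G : AddSubgroup (Fin r → ℝ) :=
    { carrier := S
      zero_mem' := ⟨0, 0, by intro j; simp⟩
      add_mem' := by
        rintro x y ⟨t, p, hx⟩ ⟨t', p', hy⟩
        refine ⟨t + t', p + p', fun j => ?_⟩
        simp only [Pi.add_apply, hx j, hy j, add_mul, Finset.sum_add_distrib, Int.cast_add]
        ring
      neg_mem' := by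
        rintro x ⟨t, p, hx⟩
        refine ⟨-t, -p, fun j => ?_⟩
        simp only [Pi.neg_apply, hx j, neg_mul, Finset.sum_neg_distrib, Int.cast_neg]
        ring } with hG
  set H : AddSubgroup (Fin r → ℝ) := G.topologicalClosure with hH
  have hHset : (H : Set (Fin r → ℝ)) = closure S := rfl
  have hc : IsClosed (H : Set (Fin r → ℝ)) := G.isClosed_topologicalClosure
  have hne : (H : Set (Fin r → ℝ)) ≠ Set.univ := by
    rw [hHset]
    intro habs
    exact hnd (dense_iff_closure_eq.mpr habs)
  obtain ⟨f, hf0, hf⟩ := key_lemma (finrank ℝ (Fin r → ℝ)) (Fin r → ℝ) rfl H hc hne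
  have hSH : S ⊆ (H : Set (Fin r → ℝ)) := subset_closure
  -- integers: f on standard basis vectors
  have hbasis : ∀ j : Fin r, ∃ z : ℤ, f (Pi.single j 1) = z := by
    intro j
    apply hf
    apply hSH
    refine ⟨0, Pi.single j 1, fun j' => ?_⟩
    simp [Pi.single_apply, apply_ite]
  choose q hq using hbasis
  -- f vanishes on the image of t ↦ (⟨t, ω_j⟩)_j
  have horbit : ∀ t : Fin n → ℝ, (fun j => ∑ i, t i * ω j i) ∈ S := by
    intro t
    exact ⟨t, 0, fun j => by simp⟩
  set g : (Fin n → ℝ) →ₗ[ℝ] ℝ :=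
    { toFun := fun t => f (fun j => ∑ i, t i * ω j i)
      map_add' := by
        intro t t'
        rw [← map_add]
        congr 1
        funext j
        simp [add_mul, Finset.sum_add_distrib]
      map_smul' := by
        intro c t
        dsimp only [RingHom.id_apply]
        have hrw : (fun j => ∑ i, (c • t) i * ω j i)
            = c • (fun j => ∑ i, t i * ω j i) := by
          funext j
          simp [Finset.mul_sum, mul_assoc]
        rw [hrw, f.map_smul, smul_eq_mul] } with hg
  have hgint : ∀ t, ∃ z : ℤ, g t = z := fun t => hf _ (hSH (horbit t))
  have hg0 : g = 0 := by
    by_contra hg0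
    obtain ⟨t, ht⟩ : ∃ t, g t ≠ 0 := by
      by_contra habs
      push_neg at habs
      exact hg0 (LinearMap.ext fun t => habs t)
    obtain ⟨z, hz⟩ := hgint (((g t)⁻¹ * (1/2)) • t)
    rw [map_smul, smul_eq_mul, mul_assoc, mul_comm ((1:ℝ)/2) (g t), ← mul_assoc,
      inv_mul_cancel₀ ht, one_mul] at hz
    have h1 : (0:ℝ) < (z:ℝ) := by rw [← hz]; norm_num
    have h2 : (z:ℝ) < 1 := by rw [← hz]; norm_num
    have h1' : 0 < z := by exact_mod_cast h1
    have h2' : z < 1 := by exact_mod_cast h2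
    omega
  -- deduce the integer relation ∑ q j • ω j = 0
  have hfx : ∀ x : Fin r → ℝ, f x = ∑ j, x j * f (Pi.single j 1) := by
    intro x
    conv_lhs => rw [pi_eq_sum_univ x]
    rw [map_sum]
    congr 1
    funext j
    rw [map_smul, smul_eq_mul]
    congr 2
    funext j'
    simp [Pi.single_apply, eq_comm]
  have hrel : (∑ j, ((q j : ℝ)) • ω j) = 0 := by
    funext i
    have h1g : g (Pi.single i 1) = 0 := by rw [hg0]; rfl
    have h2 : (fun j : Fin r => ∑ i' : Fin n, (Pi.single i 1 : Fin n → ℝ) i' * ω j i')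
        = fun j : Fin r => ω j i := by
      funext j
      simp [Pi.single_apply, ite_mul, one_mul, zero_mul]
    have h1 : f (fun j : Fin r => ω j i) = 0 := by rw [← h2]; exact h1g
    rw [hfx] at h1
    simp only [Finset.sum_apply, Pi.smul_apply, smul_eq_mul, Pi.zero_apply]
    rw [← h1]
    congr 1
    funext j
    rw [hq j]
    ring
  have hq0 : ∀ j, q j = 0 := hω q hrel
  apply hf0
  refine LinearMap.ext fun x => ?_
  rw [hfx x]
  simp only [LinearMap.zero_apply]
  apply Finset.sum_eq_zero
  intro j _
  rw [hq j, hq0 j]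
  simp
end

section
/- Let F be a finite family of exponential sums with real frequencies on ℂ^n. Then the amoeba 𝒴_F := ⋃_{χ ∈ Ch Ξ_F} Re V(F_χ) is a closed subset of ℝ^n. -/
open Complex

/-- The zero set of the character-perturbed system `F_χ` in `ℂ^n`, for a finite system of
exponential sums with real frequencies given by spectra `Λ k` and coefficients `c k`. -/
def expSumZeroSet (n N : ℕ) (Λ : Fin N → Finset (Fin n → ℝ)) (c : Fin N → (Fin n → ℝ) → ℂ)
    (χ : AddChar (Fin n → ℝ) Circle) : Set (Fin n → ℂ) :=
  {z | ∀ k, ∑ l ∈ Λ k, c k l * (χ l : ℂ) * Complex.exp (∑ j, z j * (l j : ℂ)) = 0}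

/-- The amoeba `𝒴_F = ⋃_χ Re V(F_χ)` of a finite system of exponential sums with real
frequencies is a closed subset of `ℝ^n`. -/
theorem amoeba_isClosed (n N : ℕ) (Λ : Fin N → Finset (Fin n → ℝ))
    (c : Fin N → (Fin n → ℝ) → ℂ) (hc : ∀ k, ∀ l ∈ Λ k, c k l ≠ 0) :
    IsClosed (⋃ χ : AddChar (Fin n → ℝ) Circle,
      (fun z : Fin n → ℂ => fun j => (z j).re) '' expSumZeroSet n N Λ c χ) := by
  -- The set `S` of pairs `(f, x)` where `f` is a (not necessarily continuous) character
  -- and the perturbed system vanishes at the real point `x`.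
  set S : Set (((Fin n → ℝ) → Circle) × (Fin n → ℝ)) :=
    {p | (p.1 0 = 1 ∧ ∀ a b, p.1 (a + b) = p.1 a * p.1 b) ∧
      ∀ k, ∑ l ∈ Λ k, c k l * (p.1 l : ℂ) * Complex.exp (∑ j, (p.2 j : ℂ) * (l j : ℂ)) = 0}
    with hS
  have key : (⋃ χ : AddChar (Fin n → ℝ) Circle,
      (fun z : Fin n → ℂ => fun j => (z j).re) '' expSumZeroSet n N Λ c χ) = Prod.snd '' S := by
    ext x
    simp only [Set.mem_iUnion, Set.mem_image, hS, Set.mem_setOf_eq, expSumZeroSet, Prod.exists]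
    constructor
    · rintro ⟨χ, z, hz, rfl⟩
      refine ⟨fun l => χ l * Circle.exp (∑ j, (z j).im * l j), fun j => (z j).re,
        ⟨⟨?_, ?_⟩, ?_⟩, rfl⟩
      · simp
      · intro a b
        simp only [AddChar.map_add_eq_mul]
        rw [show (∑ j, (z j).im * (a + b) j) = (∑ j, (z j).im * a j) + ∑ j, (z j).im * b j by
          rw [← Finset.sum_add_distrib]; exact Finset.sum_congr rfl fun j _ => by
            simp [Pi.add_apply, mul_add]]
        rw [Circle.exp_add]; exact mul_mul_mul_comm _ _ _ _
      · intro k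
        have := hz k
        rw [← this]
        refine Finset.sum_congr rfl fun l _ => ?_
        have hxy : (∑ j, ((z j).re : ℂ) * (l j : ℂ)) + (↑(∑ j, (z j).im * l j) : ℂ) * I
            = ∑ j, z j * (l j : ℂ) := by
          push_cast
          rw [Finset.sum_mul, ← Finset.sum_add_distrib]
          refine Finset.sum_congr rfl fun j _ => ?_
          conv_rhs => rw [← Complex.re_add_im (z j)]
          push_cast
          ring
        rw [← hxy, Complex.exp_add]
        simp only [Circle.coe_exp, Circle.coe_mul]
        ring
    · rintro ⟨f, x', ⟨⟨h0, hadd⟩, hsum⟩, rfl⟩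
      refine ⟨AddChar.mk f h0 hadd, fun j => (x' j : ℂ), fun k => ?_, by funext j; simp⟩
      simpa using hsum k
  rw [key]
  have hcl : IsClosed S := by
    have h1 : IsClosed {p : ((Fin n → ℝ) → Circle) × (Fin n → ℝ) | p.1 0 = 1} :=
      isClosed_eq ((continuous_apply (0 : Fin n → ℝ)).comp continuous_fst) continuous_const
    have h2 : IsClosed {p : ((Fin n → ℝ) → Circle) × (Fin n → ℝ) |
        ∀ a b, p.1 (a + b) = p.1 a * p.1 b} := by
      have : {p : ((Fin n → ℝ) → Circle) × (Fin n → ℝ) | ∀ a b, p.1 (a + b) = p.1 a * p.1 b}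
          = ⋂ a, ⋂ b, {p | p.1 (a + b) = p.1 a * p.1 b} := by
        ext p; simp
      rw [this]
      refine isClosed_iInter fun a => isClosed_iInter fun b =>
        isClosed_eq ((continuous_apply (a + b)).comp continuous_fst)
          (((continuous_apply a).comp continuous_fst).mul
            ((continuous_apply b).comp continuous_fst))
    have h3 : IsClosed {p : ((Fin n → ℝ) → Circle) × (Fin n → ℝ) |
        ∀ k, ∑ l ∈ Λ k, c k l * (p.1 l : ℂ) * Complex.exp (∑ j, (p.2 j : ℂ) * (l j : ℂ)) = 0} := by
      have : {p : ((Fin n → ℝ) → Circle) × (Fin n → ℝ) |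
          ∀ k, ∑ l ∈ Λ k, c k l * (p.1 l : ℂ) * Complex.exp (∑ j, (p.2 j : ℂ) * (l j : ℂ)) = 0}
          = ⋂ k, {p | ∑ l ∈ Λ k, c k l * (p.1 l : ℂ)
              * Complex.exp (∑ j, (p.2 j : ℂ) * (l j : ℂ)) = 0} := by
        ext p; simp
      rw [this]
      refine isClosed_iInter fun k => isClosed_eq ?_ continuous_const
      refine continuous_finset_sum _ fun l _ => ?_
      refine Continuous.mul (Continuous.mul continuous_const ?_) ?_
      · exact continuous_subtype_val.comp ((continuous_apply l).comp continuous_fst)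
      · exact Complex.continuous_exp.comp (continuous_finset_sum _ fun j _ =>
          ((Complex.continuous_ofReal.comp ((continuous_apply j).comp continuous_snd)).mul
            continuous_const))
    have : S = ({p | p.1 0 = 1} ∩ {p | ∀ a b, p.1 (a + b) = p.1 a * p.1 b}) ∩
        {p | ∀ k, ∑ l ∈ Λ k, c k l * (p.1 l : ℂ)
          * Complex.exp (∑ j, (p.2 j : ℂ) * (l j : ℂ)) = 0} := by
      ext p; simp [hS, and_assoc]
    rw [this]
    exact ((h1.inter h2).inter h3)
  exact isClosedMap_snd_of_compactSpace S hcl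
end

section
/- Let F be a finite set of exponential sums on ℂ^n with real frequencies such that the rank of the additive group Ξ_F generated by the frequencies equals the dimension of the ℝ-vector space spanned by the frequencies. Then 𝒴_F = Re V(F), i.e., for every character χ of Ξ_F, Re V(F_χ) = Re V(F). -/
open Complex

/-- Any character of the frequency group is realized by a real linear functional, provided the
rank of the `ℤ`-span equals the dimension of the `ℝ`-span. -/
lemma exists_linear_of_rank_eq {n : ℕ} (S : Set (Fin n → ℝ)) (hS : S.Finite)
    (hrank : Module.finrank ℤ ↥(Submodule.span ℤ S) = Module.finrank ℝ ↥(Submodule.span ℝ S))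
    (χ : AddChar (Fin n → ℝ) Circle) :
    ∃ f : (Fin n → ℝ) →ₗ[ℝ] ℝ, ∀ l ∈ S, (χ l : ℂ) = Complex.exp (f l * Complex.I) := by
  classical
  have hfin : Module.Finite ℤ ↥(Submodule.span ℤ S) :=
    Module.Finite.span_of_finite ℤ hS
  set r := Module.finrank ℤ ↥(Submodule.span ℤ S) with hr
  let b : Module.Basis (Fin r) ℤ ↥(Submodule.span ℤ S) := Module.finBasis ℤ _
  let v : Fin r → (Fin n → ℝ) := fun i => (b i : Fin n → ℝ)
  -- the ℤ-span of the basis vectors recovers the span of S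
  have hspanZ : Submodule.span ℤ (Set.range v) = Submodule.span ℤ S := by
    have : Set.range v = (Submodule.span ℤ S).subtype '' Set.range b := by
      ext x; simp [v, Set.mem_image]
    rw [this, ← Submodule.map_span, b.span_eq, Submodule.map_top,
      Submodule.range_subtype]
  have hsub : ∀ x, x ∈ Submodule.span ℤ S → x ∈ Submodule.span ℝ S := fun x hx =>
    Submodule.span_subset_span ℤ ℝ S hx
  have hspanR : Submodule.span ℝ (Set.range v) = Submodule.span ℝ S := by
    apply le_antisymm
    · rw [Submodule.span_le]
      rintro x ⟨i, rfl⟩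
      exact hsub _ (b i).2
    · rw [Submodule.span_le]
      intro x hx
      exact Submodule.span_subset_span ℤ ℝ _
        (hspanZ ▸ Submodule.subset_span hx)
  have li : LinearIndependent ℝ v := by
    rw [linearIndependent_iff_card_eq_finrank_span]
    rw [Set.finrank, hspanR, Fintype.card_fin]
    exact hrank
  have li' : LinearIndepOn ℝ id (Set.range v) := (linearIndepOn_id_range_iff li.injective).2 li
  let B := Module.Basis.extend li'
  let f : (Fin n → ℝ) →ₗ[ℝ] ℝ := B.constr ℝ (fun x => Complex.arg (χ (x : Fin n → ℝ)))
  have hcirc : ∀ x : Fin n → ℝ, (χ x : ℂ) = Complex.exp (Complex.arg (χ x) * Complex.I) := by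
    intro x
    have h1 := Complex.norm_mul_exp_arg_mul_I (χ x : ℂ)
    rw [Circle.norm_coe, Complex.ofReal_one, one_mul] at h1
    exact h1.symm
  have hfv : ∀ i, f (v i) = Complex.arg (χ (v i)) := by
    intro i
    have hmem : v i ∈ li'.extend (Set.subset_univ _) :=
      li'.subset_extend _ ⟨i, rfl⟩
    have hB : B ⟨v i, hmem⟩ = v i := Module.Basis.extend_apply_self li' _
    conv_lhs => rw [← hB]
    exact B.constr_basis ℝ _ _
  have hind : ∀ x ∈ Submodule.span ℤ (Set.range v), (χ x : ℂ) = Complex.exp (f x * Complex.I) := by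
    intro x hx
    induction hx using Submodule.span_induction with
    | mem x hx =>
      obtain ⟨i, rfl⟩ := hx
      rw [hfv i]; exact hcirc _
    | zero => simp
    | add x y _ _ ihx ihy =>
      rw [AddChar.map_add_eq_mul, Circle.coe_mul, ihx, ihy, map_add, ← Complex.exp_add]
      push_cast
      ring_nf
    | smul a x _ ih =>
      have h1 : ((χ (a • x) : Circle) : ℂ) = (χ x : ℂ) ^ a := by
        rw [AddChar.map_zsmul_eq_zpow]; exact map_zpow Circle.coeHom (χ x) a
      have h2 : f (a • x) = (a : ℝ) * f x := by
        rw [map_zsmul, zsmul_eq_mul]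
      rw [h1, ih, ← Complex.exp_int_mul, h2]
      push_cast
      ring_nf
  refine ⟨f, fun l hl => hind l ?_⟩
  rw [hspanZ]
  exact Submodule.subset_span hl

/-- Shifting by the imaginary linear functional realizing `χ` maps `V(F)` to `V(F_χ)`. -/
lemma shift_mem_iff {n N : ℕ} (Λ : Fin N → Finset (Fin n → ℝ)) (c : Fin N → (Fin n → ℝ) → ℂ)
    (χ : AddChar (Fin n → ℝ) Circle) (f : (Fin n → ℝ) →ₗ[ℝ] ℝ)
    (hf : ∀ l ∈ ⋃ k, (Λ k : Set (Fin n → ℝ)), (χ l : ℂ) = Complex.exp (f l * Complex.I))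
    (z : Fin n → ℂ) :
    (fun j => z j - (f (fun i => if j = i then 1 else 0) : ℂ) * Complex.I)
        ∈ expSumZeroSet n N Λ c χ ↔ z ∈ expSumZeroSet n N Λ c 1 := by
  have key : ∀ k, ∀ l ∈ Λ k,
      c k l * (χ l : ℂ) * Complex.exp
        (∑ j, (z j - (f (fun i => if j = i then 1 else 0) : ℂ) * Complex.I) * (l j : ℂ))
      = c k l * ((1 : AddChar (Fin n → ℝ) Circle) l : ℂ)
          * Complex.exp (∑ j, z j * (l j : ℂ)) := by
    intro k l hl
    have hlS : l ∈ ⋃ k, (Λ k : Set (Fin n → ℝ)) := Set.mem_iUnion.2 ⟨k, hl⟩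
    have hsum : ∑ j, (z j - (f (fun i => if j = i then 1 else 0) : ℂ) * Complex.I) * (l j : ℂ)
        = (∑ j, z j * (l j : ℂ)) - (f l : ℂ) * Complex.I := by
      have hfl : f l = ∑ j, l j * f (fun i => if j = i then 1 else 0) := by
        have := LinearMap.pi_apply_eq_sum_univ f l
        simpa [smul_eq_mul] using this
      rw [hfl]
      push_cast
      rw [Finset.sum_mul, ← Finset.sum_sub_distrib]
      apply Finset.sum_congr rfl
      intro j _
      ring
    rw [hsum, Complex.exp_sub, hf l hlS, AddChar.one_apply]
    have hne : Complex.exp ((f l : ℂ) * Complex.I) ≠ 0 := Complex.exp_ne_zero _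
    push_cast
    field_simp
  constructor
  · intro hz k
    have := hz k
    rw [Finset.sum_congr rfl (key k)] at this
    exact this
  · intro hz k
    rw [Finset.sum_congr rfl (key k)]
    exact hz k

/-- If the rank of the additive group generated by the frequencies of `F` equals the dimension
of the real vector space they span, then the amoeba `𝒴_F = ⋃_χ Re V(F_χ)` equals `Re V(F)`,
i.e. every character perturbation has the same set of real parts of zeros. -/
theorem amoeba_eq_re_zeroSet_of_rank_eq (n N : ℕ) (Λ : Fin N → Finset (Fin n → ℝ))
    (c : Fin N → (Fin n → ℝ) → ℂ) (hc : ∀ k, ∀ l ∈ Λ k, c k l ≠ 0)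
    (hrank : Module.finrank ℤ ↥(Submodule.span ℤ (⋃ k, (Λ k : Set (Fin n → ℝ)))) =
      Module.finrank ℝ ↥(Submodule.span ℝ (⋃ k, (Λ k : Set (Fin n → ℝ))))) :
    (⋃ χ : AddChar (Fin n → ℝ) Circle,
        (fun z : Fin n → ℂ => fun j => (z j).re) '' expSumZeroSet n N Λ c χ) =
      (fun z : Fin n → ℂ => fun j => (z j).re) '' expSumZeroSet n N Λ c 1 := by
  classical
  have hS : (⋃ k, (Λ k : Set (Fin n → ℝ))).Finite :=
    Set.finite_iUnion fun k => (Λ k).finite_toSet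
  ext x
  simp only [Set.mem_iUnion]
  constructor
  · rintro ⟨χ, u, hu, rfl⟩
    obtain ⟨f, hf⟩ := exists_linear_of_rank_eq _ hS hrank χ
    set z : Fin n → ℂ := fun j => u j + (f (fun i => if j = i then 1 else 0) : ℂ) * Complex.I
      with hzdef
    have hzu : (fun j => z j - (f (fun i => if j = i then 1 else 0) : ℂ) * Complex.I) = u := by
      funext j; simp [hzdef]
    have hz : z ∈ expSumZeroSet n N Λ c 1 := by
      rw [← shift_mem_iff Λ c χ f hf z, hzu]; exact hu
    refine ⟨z, hz, ?_⟩
    funext j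
    simp [hzdef]
  · rintro ⟨u, hu, rfl⟩
    refine ⟨1, u, hu, rfl⟩
end

section
/- Let γ ∈ ℝ \ ℚ and f : ℂ → ℂ be given by f(z) = cos(iz) + sin(iγz) − 2. Then f has no zero on the imaginary axis, i.e., f(it) ≠ 0 for all t ∈ ℝ; equivalently 0 ∉ Re V(f). -/
open Real

/-- For irrational `γ`, the exponential sum `f(z) = cos(iz) + sin(iγz) − 2` has no zero on
the imaginary axis, i.e. no zero with real part `0`. -/
theorem no_purely_imaginary_zero (γ : ℝ) (hγ : Irrational γ) :
    ∀ z : ℂ, z.re = 0 →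
      Complex.cos (Complex.I * z) + Complex.sin (Complex.I * (γ : ℂ) * z) - 2 ≠ 0 := by
  intro z hz h
  set t := z.im with ht
  have hzt : z = (t : ℂ) * Complex.I := by
    apply Complex.ext <;> simp [hz, ht]
  have h1 : Complex.I * z = (-t : ℝ) := by
    rw [hzt]; push_cast; ring_nf; simp [Complex.I_sq]
  have h2 : Complex.I * (γ : ℂ) * z = ((-(γ * t) : ℝ) : ℂ) := by
    rw [hzt]; push_cast; ring_nf; simp [Complex.I_sq]
  rw [h1, h2, ← Complex.ofReal_cos, ← Complex.ofReal_sin] at h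
  have h' : Real.cos (-t) + Real.sin (-(γ * t)) - 2 = 0 := by
    exact_mod_cast h
  rw [Real.cos_neg, Real.sin_neg] at h'
  have hc : Real.cos t = 1 := by nlinarith [Real.cos_le_one t, Real.neg_one_le_sin (γ * t), Real.neg_one_le_cos t, Real.sin_le_one (γ * t)]
  have hs : Real.sin (γ * t) = -1 := by nlinarith [Real.cos_le_one t, Real.neg_one_le_sin (γ * t)]
  obtain ⟨n, hn⟩ := (Real.cos_eq_one_iff t).1 hc
  obtain ⟨k, hk⟩ := Real.sin_eq_neg_one_iff.1 hs
  rcases eq_or_ne n 0 with rfl | hn0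
  · simp at hn
    rw [← hn, mul_zero] at hs
    simp at hs
  · have hπ := Real.pi_pos
    have : γ = ((((4 * k - 1) / (4 * n) : ℚ)) : ℝ) := by
      have hne : (n : ℝ) ≠ 0 := Int.cast_ne_zero.mpr hn0
      rw [← hn] at hk
      push_cast
      field_simp
      nlinarith [hk]
    exact hγ ⟨_, this.symm⟩
end
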